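/- Let H̃ = p₁² + p₂² + (a·q₁ + b)·q₂^(-2/3) on q₂ > 0 and Z̃₃ = p₁(2p₁² + 3p₂²) + (3a/2)(2p₁q₁ + 3p₂q₂)·q₂^(-2/3) + 3b·p₁·q₂^(-2/3). Then {H̃, Z̃₃} = 0. -/

import Mathlib

noncomputable def pb (F G : ℝ → ℝ → ℝ → ℝ → ℝ) (q1 q2 p1 p2 : ℝ) : ℝ :=
  deriv (fun x => F x q2 p1 p2) q1 * deriv (fun x => G q1 q2 x p2) p1
  + deriv (fun x => F q1 x p1 p2) q2 * deriv (fun x => G q1 q2 p1 x) p2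
  - deriv (fun x => F q1 q2 x p2) p1 * deriv (fun x => G x q2 p1 p2) q1
  - deriv (fun x => F q1 q2 p1 x) p2 * deriv (fun x => G q1 x p1 p2) q2

noncomputable def Ht (a b : ℝ) (q1 q2 p1 p2 : ℝ) : ℝ :=
  p1 ^ 2 + p2 ^ 2 + (a * q1 + b) * q2 ^ (-(2 : ℝ) / 3)

noncomputable def Z3 (a b : ℝ) (q1 q2 p1 p2 : ℝ) : ℝ :=
  p1 * (2 * p1 ^ 2 + 3 * p2 ^ 2)
  + (3 * a / 2) * (2 * p1 * q1 + 3 * p2 * q2) * q2 ^ (-(2 : ℝ) / 3)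
  + 3 * b * p1 * q2 ^ (-(2 : ℝ) / 3)

theorem stmt2 (a b : ℝ) (q1 q2 p1 p2 : ℝ) (hq2 : 0 < q2) :
    pb (Ht a b) (Z3 a b) q1 q2 p1 p2 = 0 := by
  set α : ℝ := -(2 : ℝ) / 3 with hα
  set c : ℝ := q2 ^ α with hc
  set d : ℝ := q2 ^ (α - 1) with hd
  have hrpow : HasDerivAt (fun x : ℝ => x ^ α) (α * d) q2 := by
    simpa using Real.hasDerivAt_rpow_const (x := q2) (p := α) (Or.inl hq2.ne')
  -- derivatives of Ht
  have h1 : deriv (fun x => Ht a b x q2 p1 p2) q1 = a * c := by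
    have : HasDerivAt (fun x => Ht a b x q2 p1 p2) (a * c) q1 := by
      have := ((((hasDerivAt_id q1).const_mul a).add_const b).mul_const c).const_add
        (p1 ^ 2 + p2 ^ 2)
      convert this using 1 <;> (try funext x) <;> (try simp only [Z3, Ht, id_eq, ← hα]) <;> (try rfl) <;> ring
    exact this.deriv
  have h2 : deriv (fun x => Ht a b q1 x p1 p2) q2 = (a * q1 + b) * (α * d) := by
    have : HasDerivAt (fun x => Ht a b q1 x p1 p2) ((a * q1 + b) * (α * d)) q2 := by
      have := (hrpow.const_mul (a * q1 + b)).const_add (p1 ^ 2 + p2 ^ 2)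
      convert this using 1 <;> (try funext x) <;> (try simp only [Z3, Ht, id_eq, ← hα]) <;> (try rfl) <;> ring
    exact this.deriv
  have h3 : deriv (fun x => Ht a b q1 q2 x p2) p1 = 2 * p1 := by
    have : HasDerivAt (fun x => Ht a b q1 q2 x p2) (2 * p1) p1 := by
      have := ((hasDerivAt_pow 2 p1).add_const (p2 ^ 2)).add_const ((a * q1 + b) * c)
      convert this using 1 <;> (try funext x) <;> (try simp only [Z3, Ht, id_eq, ← hα]) <;> (try rfl) <;> ring
    exact this.deriv
  have h4 : deriv (fun x => Ht a b q1 q2 p1 x) p2 = 2 * p2 := by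
    have : HasDerivAt (fun x => Ht a b q1 q2 p1 x) (2 * p2) p2 := by
      have := (((hasDerivAt_pow 2 p2).const_add (p1 ^ 2)).add_const ((a * q1 + b) * c))
      convert this using 1 <;> (try funext x) <;> (try simp only [Z3, Ht, id_eq, ← hα]) <;> (try rfl) <;> ring
    exact this.deriv
  -- derivatives of Z3
  have h5 : deriv (fun x => Z3 a b x q2 p1 p2) q1 = 3 * a * p1 * c := by
    have : HasDerivAt (fun x => Z3 a b x q2 p1 p2) (3 * a * p1 * c) q1 := by
      have := (((((hasDerivAt_id q1).const_mul (2 * p1)).add_const (3 * p2 * q2)).const_mul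
        (3 * a / 2)).mul_const c).const_add (p1 * (2 * p1 ^ 2 + 3 * p2 ^ 2))
      have := this.add_const (3 * b * p1 * c)
      convert this using 1 <;> (try funext x) <;> (try simp only [Z3, Ht, id_eq, ← hα]) <;> (try rfl) <;> ring
    exact this.deriv
  have h6 : deriv (fun x => Z3 a b q1 x p1 p2) q2 =
      (3 * a / 2) * (3 * p2 * c + (2 * p1 * q1 + 3 * p2 * q2) * (α * d))
        + 3 * b * p1 * (α * d) := by
    have hf : HasDerivAt (fun x : ℝ => (2 * p1 * q1 + 3 * p2 * x) * x ^ α)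
        (3 * p2 * c + (2 * p1 * q1 + 3 * p2 * q2) * (α * d)) q2 := by
      have := (((hasDerivAt_id q2).const_mul (3 * p2)).const_add (2 * p1 * q1)).mul hrpow
      convert this using 1 <;> (try funext x) <;> (try simp only [Z3, Ht, id_eq, ← hα]) <;> (try rfl) <;> ring
    have : HasDerivAt (fun x => Z3 a b q1 x p1 p2)
        ((3 * a / 2) * (3 * p2 * c + (2 * p1 * q1 + 3 * p2 * q2) * (α * d))
          + 3 * b * p1 * (α * d)) q2 := by
      have := ((hf.const_mul (3 * a / 2)).const_add (p1 * (2 * p1 ^ 2 + 3 * p2 ^ 2))).add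
        (hrpow.const_mul (3 * b * p1))
      convert this using 1 <;> (try funext x) <;> (try simp only [Z3, Ht, id_eq, ← hα, Pi.add_apply]) <;> (try rfl) <;> ring
    exact this.deriv
  have h7 : deriv (fun x => Z3 a b q1 q2 x p2) p1 =
      (6 * p1 ^ 2 + 3 * p2 ^ 2) + 3 * a * q1 * c + 3 * b * c := by
    have : HasDerivAt (fun x => Z3 a b q1 q2 x p2)
        ((6 * p1 ^ 2 + 3 * p2 ^ 2) + 3 * a * q1 * c + 3 * b * c) p1 := by
      have hf : HasDerivAt (fun x : ℝ => x * (2 * x ^ 2 + 3 * p2 ^ 2))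
          (6 * p1 ^ 2 + 3 * p2 ^ 2) p1 := by
        have := (hasDerivAt_id p1).mul
          (((hasDerivAt_pow 2 p1).const_mul 2).add_const (3 * p2 ^ 2))
        convert this using 1 <;> (try funext x) <;> (try simp only [Z3, Ht, id_eq, ← hα]) <;> (try rfl) <;> ring
      have hg : HasDerivAt (fun x : ℝ => (3 * a / 2) * (2 * x * q1 + 3 * p2 * q2) * c)
          (3 * a * q1 * c) p1 := by
        have := ((((hasDerivAt_id p1).const_mul (2 * q1)).add_const (3 * p2 * q2)).const_mul
          (3 * a / 2)).mul_const c
        convert this using 1 <;> (try funext x) <;> (try simp only [Z3, Ht, id_eq, ← hα]) <;> (try rfl) <;> ring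
      have hh : HasDerivAt (fun x : ℝ => 3 * b * x * c) (3 * b * c) p1 := by
        have := ((hasDerivAt_id p1).const_mul (3 * b)).mul_const c
        convert this using 1 <;> (try funext x) <;> (try simp only [Z3, Ht, id_eq, ← hα]) <;> (try rfl) <;> ring
      exact (hf.add hg).add hh
    exact this.deriv
  have h8 : deriv (fun x => Z3 a b q1 q2 p1 x) p2 =
      6 * p1 * p2 + (3 * a / 2) * (3 * q2) * c := by
    have : HasDerivAt (fun x => Z3 a b q1 q2 p1 x)
        (6 * p1 * p2 + (3 * a / 2) * (3 * q2) * c) p2 := by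
      have hf : HasDerivAt (fun x : ℝ => p1 * (2 * p1 ^ 2 + 3 * x ^ 2)) (6 * p1 * p2) p2 := by
        have := (((hasDerivAt_pow 2 p2).const_mul 3).const_add (2 * p1 ^ 2)).const_mul p1
        convert this using 1 <;> (try funext x) <;> (try simp only [Z3, Ht, id_eq, ← hα]) <;> (try rfl) <;> ring
      have hg : HasDerivAt (fun x : ℝ => (3 * a / 2) * (2 * p1 * q1 + 3 * x * q2) * c)
          ((3 * a / 2) * (3 * q2) * c) p2 := by
        have := ((((hasDerivAt_id p2).const_mul (3 * q2)).const_add (2 * p1 * q1)).const_mul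
          (3 * a / 2)).mul_const c
        convert this using 1 <;> (try funext x) <;> (try simp only [Z3, Ht, id_eq, ← hα]) <;> (try rfl) <;> ring
      have := (hf.add hg).add_const (3 * b * p1 * c)
      convert this using 1 <;> (try funext x) <;> (try simp only [Z3, Ht, id_eq, ← hα]) <;> (try rfl) <;> ring
    exact this.deriv
  have hcd : c = d * q2 := by
    rw [hc, hd, ← Real.rpow_add_one hq2.ne']
    ring_nf
  rw [pb, h1, h2, h3, h4, h5, h6, h7, h8, hcd]
  ring
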